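/- Let λ be a Latin square of size N, P the permutation matrix on C^N ⊗ C^N defined by P = Σ_{k,l} |λ(l,k), k⟩⟨l, k|, and M₁,…,M_m a collection of mutually unbiased bases of C^N (unitaries such that M_i† M_j is a rescaled complex Hadamard matrix for i ≠ j). Then the matrices W^(i) = P (I ⊗ M_i) P^T for i = 1,…,m are mutually entangled: for all i ≠ j, W^(i)† W^(j) = P (I ⊗ M_i† M_j) P^T, and every column of W^(i)† W^(j) is a maximally entangled vector in C^N ⊗ C^N. -/

import Mathlib

open Matrix

open Kronecker

/-- A unit vector `v` of `ℂ^N ⊗ ℂ^N` is maximally entangled iff its reshaping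
`R_{ab} = v_{(a,b)}` satisfies `Rᴴ R = (1/N)·I`, i.e. `√N·R` is unitary. -/
def MaxEnt (N : ℕ) (v : Fin N × Fin N → ℂ) : Prop :=
  (Matrix.of fun a b : Fin N => v (a, b))ᴴ * (Matrix.of fun a b : Fin N => v (a, b)) =
    ((N : ℂ))⁻¹ • 1

/-- Given a Latin square `lam`, its permutation matrix `P`, and
mutually unbiased bases `M₁,…,M_m`, the gates `W⁽ⁱ⁾ = P (I ⊗ M_i) Pᵀ` are
mutually entangled: `W⁽ⁱ⁾ᴴ W⁽ʲ⁾ = P (I ⊗ M_iᴴ M_j) Pᵀ` and each of its columns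
is a maximally entangled vector. -/
theorem stmt11 (N m : ℕ) (hN : 0 < N)
    (lam : Fin N → Fin N → Fin N)
    (hrow : ∀ j, Function.Bijective (lam j))
    (hcol : ∀ k, Function.Bijective fun j => lam j k)
    (P : Matrix (Fin N × Fin N) (Fin N × Fin N) ℂ)
    (hP : P = Matrix.of fun p q => if p = (lam q.1 q.2, q.2) then 1 else 0)
    (M : Fin m → Matrix (Fin N) (Fin N) ℂ)
    (hMunit : ∀ i, (M i)ᴴ * M i = 1)
    (hMUB : ∀ i j, i ≠ j → ∀ a b, ‖((M i)ᴴ * M j) a b‖ = (Real.sqrt N)⁻¹)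
    (W : Fin m → Matrix (Fin N × Fin N) (Fin N × Fin N) ℂ)
    (hW : ∀ i, W i = P * ((1 : Matrix (Fin N) (Fin N) ℂ) ⊗ₖ M i) * Pᵀ) :
    ∀ i j, i ≠ j →
      (W i)ᴴ * W j = P * ((1 : Matrix (Fin N) (Fin N) ℂ) ⊗ₖ ((M i)ᴴ * M j)) * Pᵀ ∧
        ∀ c, MaxEnt N fun p => ((W i)ᴴ * W j) p c := by
  -- the permutation underlying P
  have hσbij : Function.Bijective (fun q : Fin N × Fin N => (lam q.1 q.2, q.2)) := by
    constructor
    · rintro ⟨a, b⟩ ⟨a', b'⟩ h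
      simp only [Prod.mk.injEq] at h
      obtain ⟨h1, h2⟩ := h
      subst h2
      exact Prod.ext ((hcol b).1 h1) rfl
    · rintro ⟨a, b⟩
      obtain ⟨j, hj⟩ := (hcol b).2 a
      exact ⟨(j, b), by simpa [Prod.ext_iff] using hj⟩
  set σ : (Fin N × Fin N) ≃ (Fin N × Fin N) := Equiv.ofBijective _ hσbij with hσ
  have hσapp : ∀ q : Fin N × Fin N, σ q = (lam q.1 q.2, q.2) := fun q => rfl
  have hPσ : P = σ.symm.toPEquiv.toMatrix := by
    rw [hP]; ext p q
    have hiff : (p = (lam q.1 q.2, q.2)) ↔ (σ.symm p = q) := by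
      rw [← hσapp q, Equiv.symm_apply_eq, eq_comm]
    simp only [PEquiv.toMatrix_apply, Equiv.toPEquiv_apply, Option.mem_def,
      Option.some.injEq, Matrix.of_apply]
    rw [if_congr hiff rfl rfl]
  have hPT : Pᵀ = σ.toPEquiv.toMatrix := by
    rw [hPσ, ← PEquiv.toMatrix_symm, ← Equiv.toPEquiv_symm, Equiv.symm_symm]
  have hentry : ∀ (X : Matrix (Fin N × Fin N) (Fin N × Fin N) ℂ) p q,
      (P * X * Pᵀ) p q = X (σ.symm p) (σ.symm q) := by
    intro X p q
    rw [hPT, hPσ, Matrix.mul_assoc, PEquiv.toMatrix_toPEquiv_mul, PEquiv.mul_toMatrix_toPEquiv]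
    simp
  have hPTP : Pᵀ * P = 1 := by
    rw [hPT, hPσ, ← PEquiv.toMatrix_trans, ← Equiv.toPEquiv_trans,
      Equiv.self_trans_symm, Equiv.toPEquiv_refl, PEquiv.toMatrix_refl]
  have hPH : Pᴴ = Pᵀ := by
    rw [hP]; ext p q
    simp only [conjTranspose_apply, transpose_apply, Matrix.of_apply]
    split <;> simp
  have hPTH : (Pᵀ)ᴴ = P := by
    rw [← hPH, Matrix.conjTranspose_conjTranspose]
  have hKH : ∀ i, ((1 : Matrix (Fin N) (Fin N) ℂ) ⊗ₖ M i)ᴴ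
      = (1 : Matrix (Fin N) (Fin N) ℂ) ⊗ₖ (M i)ᴴ := by
    intro i
    ext p q
    simp only [conjTranspose_apply, kroneckerMap_apply, star_mul', Matrix.one_apply]
    by_cases h : q.1 = p.1
    · simp [h]
    · simp [h, Ne.symm h]
  intro i j hij
  set A := (M i)ᴴ * M j with hA
  have h1 : (W i)ᴴ * W j = P * ((1 : Matrix (Fin N) (Fin N) ℂ) ⊗ₖ A) * Pᵀ := by
    rw [hW i, hW j, Matrix.conjTranspose_mul, Matrix.conjTranspose_mul, hPTH, hPH, hKH]
    have hcancel : ∀ X : Matrix (Fin N × Fin N) (Fin N × Fin N) ℂ, Pᵀ * (P * X) = X := by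
      intro X; rw [← Matrix.mul_assoc, hPTP, Matrix.one_mul]
    simp only [Matrix.mul_assoc, hcancel]
    rw [← Matrix.mul_assoc ((1 : Matrix (Fin N) (Fin N) ℂ) ⊗ₖ (M i)ᴴ),
      ← Matrix.mul_kronecker_mul, Matrix.one_mul]
  refine ⟨h1, ?_⟩
  -- entry formula for a column
  have hsnd : ∀ p : Fin N × Fin N, (σ.symm p).2 = p.2 := by
    intro p
    have h := Equiv.apply_symm_apply σ p
    rw [hσapp] at h
    simpa using congrArg Prod.snd h
  have hfst : ∀ p : Fin N × Fin N, lam (σ.symm p).1 p.2 = p.1 := by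
    intro p
    have h := Equiv.apply_symm_apply σ p
    rw [hσapp] at h
    have h2 := congrArg Prod.fst h
    rw [hsnd p] at h2
    exact h2
  intro c
  have hv : ∀ a b : Fin N, ((W i)ᴴ * W j) (a, b) c
      = if a = lam (σ.symm c).1 b then A b c.2 else 0 := by
    intro a b
    rw [h1, hentry]
    rw [Matrix.kroneckerMap_apply, hsnd (a, b), hsnd c, Matrix.one_apply]
    have hcond : (σ.symm (a, b)).1 = (σ.symm c).1 ↔ a = lam (σ.symm c).1 b := by
      constructor
      · intro h
        have h0 := hfst (a, b)
        rw [h] at h0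
        exact h0.symm
      · intro h
        have h2 : σ ((σ.symm c).1, b) = (a, b) := by
          rw [hσapp]; simp [h]
        have h3 := congrArg (fun x => (σ.symm x).1) h2
        simpa using h3.symm
    rw [if_congr hcond rfl rfl]
    split <;> simp
  unfold MaxEnt
  ext b b'
  rw [Matrix.mul_apply]
  simp only [Matrix.conjTranspose_apply, Matrix.of_apply, hv]
  by_cases hbb : b = b'
  · subst hbb
    rw [Finset.sum_eq_single (lam (σ.symm c).1 b)]
    · rw [if_pos rfl]
      have hnorm := hMUB i j hij b c.2
      have hsq : ‖A b c.2‖ ^ 2 = (N : ℝ)⁻¹ := by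
        rw [hA, hnorm, inv_pow, Real.sq_sqrt (Nat.cast_nonneg N)]
      rw [Complex.star_def, ← Complex.normSq_eq_conj_mul_self]
      have hns : Complex.normSq (A b c.2) = (N : ℝ)⁻¹ := by
        rw [Complex.normSq_eq_norm_sq, hsq]
      rw [hns]
      simp only [Matrix.smul_apply, Matrix.one_apply_eq, smul_eq_mul, mul_one]
      simp [Complex.ofReal_inv]
    · intro a _ ha
      rw [if_neg ha]
      simp
    · simp
  · rw [Finset.sum_eq_zero]
    · simp [Matrix.one_apply, hbb]
    · intro a _
      by_cases h1 : a = lam (σ.symm c).1 b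
      · have h2 : a ≠ lam (σ.symm c).1 b' := by
          intro h2
          exact hbb ((hrow _).1 (h1 ▸ h2))
        rw [if_neg h2]
        simp
      · rw [if_neg h1]
        simp
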